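/- Let P be an (s,k)-puzzle that is a uniquely solvable puzzle. Then s ≤ Σ_{c1=0}^{k} Σ_{c2=0}^{k−c1} min( C(k,c1), C(k,c2), C(k, k−(c1+c2)) ), where C(n,m) denotes the binomial coefficient. -/
import Mathlib


/-- Exactly two of the three propositions hold. -/
def ExactlyTwo (A B C : Prop) : Prop :=
  (A ∧ B ∧ ¬C) ∨ (A ∧ ¬B ∧ C) ∨ (¬A ∧ B ∧ C)

/-- At least two of the three propositions hold. -/
def AtLeastTwo (A B C : Prop) : Prop :=
  (A ∧ B) ∨ (A ∧ C) ∨ (B ∧ C)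

/-- A puzzle of width `k` is a finite set of rows in `{1,2,3}^k`; we use the
alphabet `Fin 3` whose three elements are denoted `1`, `2`, `3` (`3 = 0`).
`P` is a strong uniquely solvable puzzle (strong USP). -/
def IsSUSP {k : ℕ} (P : Finset (Fin k → Fin 3)) : Prop :=
  ∀ π₁ π₂ π₃ : Equiv.Perm {r // r ∈ P},
    (π₁ = π₂ ∧ π₂ = π₃) ∨
    ∃ (r : {r // r ∈ P}) (c : Fin k),
      ExactlyTwo ((π₁ r).1 c = 1) ((π₂ r).1 c = 2) ((π₃ r).1 c = 3)

/-- `P` is a uniquely solvable puzzle (USP). -/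
def IsUSP {k : ℕ} (P : Finset (Fin k → Fin 3)) : Prop :=
  ∀ π₁ π₂ π₃ : Equiv.Perm {r // r ∈ P},
    (π₁ = π₂ ∧ π₂ = π₃) ∨
    ∃ (r : {r // r ∈ P}) (c : Fin k),
      AtLeastTwo ((π₁ r).1 c = 1) ((π₂ r).1 c = 2) ((π₃ r).1 c = 3)

open Finset

private lemma usp_inj1 {k : ℕ} {P : Finset (Fin k → Fin 3)} (hP : IsUSP P)
    {r r' : Fin k → Fin 3} (hr : r ∈ P) (hr' : r' ∈ P)
    (h : ∀ c, r c = 1 ↔ r' c = 1) : r = r' := by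
  by_contra hne
  have hne' : (⟨r, hr⟩ : {x // x ∈ P}) ≠ ⟨r', hr'⟩ := fun hh => hne (congrArg Subtype.val hh)
  rcases hP (Equiv.swap ⟨r, hr⟩ ⟨r', hr'⟩) 1 1 with ⟨h1, _⟩ | ⟨r₀, c, hc⟩
  · exact hne' (Equiv.swap_eq_one_iff.mp h1)
  · simp only [AtLeastTwo, Equiv.Perm.one_apply] at hc
    have key : ∀ x : {y // y ∈ P}, ∀ c : Fin k,
        ((Equiv.swap (⟨r, hr⟩ : {y // y ∈ P}) ⟨r', hr'⟩) x).1 c = 1 → x.1 c = 1 := by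
      intro x c hx
      by_cases e1 : x = ⟨r, hr⟩
      · subst e1; rw [Equiv.swap_apply_left] at hx; exact (h c).mpr hx
      by_cases e2 : x = ⟨r', hr'⟩
      · subst e2; rw [Equiv.swap_apply_right] at hx; exact (h c).mp hx
      · rwa [Equiv.swap_apply_of_ne_of_ne e1 e2] at hx
    rcases hc with ⟨h1, h2⟩ | ⟨h1, h2⟩ | ⟨h1, h2⟩
    · have h3 := key r₀ c h1; rw [h3] at h2; exact absurd h2 (by decide)
    · have h3 := key r₀ c h1; rw [h3] at h2; exact absurd h2 (by decide)
    · rw [h1] at h2; exact absurd h2 (by decide)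

private lemma usp_inj2 {k : ℕ} {P : Finset (Fin k → Fin 3)} (hP : IsUSP P)
    {r r' : Fin k → Fin 3} (hr : r ∈ P) (hr' : r' ∈ P)
    (h : ∀ c, r c = 2 ↔ r' c = 2) : r = r' := by
  by_contra hne
  have hne' : (⟨r, hr⟩ : {x // x ∈ P}) ≠ ⟨r', hr'⟩ := fun hh => hne (congrArg Subtype.val hh)
  rcases hP 1 (Equiv.swap ⟨r, hr⟩ ⟨r', hr'⟩) 1 with ⟨h1, h2⟩ | ⟨r₀, c, hc⟩
  · exact hne' (Equiv.swap_eq_one_iff.mp h1.symm)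
  · simp only [AtLeastTwo, Equiv.Perm.one_apply] at hc
    have key : ∀ x : {y // y ∈ P}, ∀ c : Fin k,
        ((Equiv.swap (⟨r, hr⟩ : {y // y ∈ P}) ⟨r', hr'⟩) x).1 c = 2 → x.1 c = 2 := by
      intro x c hx
      by_cases e1 : x = ⟨r, hr⟩
      · subst e1; rw [Equiv.swap_apply_left] at hx; exact (h c).mpr hx
      by_cases e2 : x = ⟨r', hr'⟩
      · subst e2; rw [Equiv.swap_apply_right] at hx; exact (h c).mp hx
      · rwa [Equiv.swap_apply_of_ne_of_ne e1 e2] at hx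
    rcases hc with ⟨h1, h2⟩ | ⟨h1, h2⟩ | ⟨h1, h2⟩
    · have h3 := key r₀ c h2; rw [h3] at h1; exact absurd h1 (by decide)
    · rw [h1] at h2; exact absurd h2 (by decide)
    · have h3 := key r₀ c h1; rw [h3] at h2; exact absurd h2 (by decide)

private lemma usp_inj3 {k : ℕ} {P : Finset (Fin k → Fin 3)} (hP : IsUSP P)
    {r r' : Fin k → Fin 3} (hr : r ∈ P) (hr' : r' ∈ P)
    (h : ∀ c, r c = 3 ↔ r' c = 3) : r = r' := by
  by_contra hne
  have hne' : (⟨r, hr⟩ : {x // x ∈ P}) ≠ ⟨r', hr'⟩ := fun hh => hne (congrArg Subtype.val hh)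
  rcases hP 1 1 (Equiv.swap ⟨r, hr⟩ ⟨r', hr'⟩) with ⟨h1, h2⟩ | ⟨r₀, c, hc⟩
  · exact hne' (Equiv.swap_eq_one_iff.mp (h1.trans h2).symm)
  · simp only [AtLeastTwo, Equiv.Perm.one_apply] at hc
    have key : ∀ x : {y // y ∈ P}, ∀ c : Fin k,
        ((Equiv.swap (⟨r, hr⟩ : {y // y ∈ P}) ⟨r', hr'⟩) x).1 c = 3 → x.1 c = 3 := by
      intro x c hx
      by_cases e1 : x = ⟨r, hr⟩
      · subst e1; rw [Equiv.swap_apply_left] at hx; exact (h c).mpr hx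
      by_cases e2 : x = ⟨r', hr'⟩
      · subst e2; rw [Equiv.swap_apply_right] at hx; exact (h c).mp hx
      · rwa [Equiv.swap_apply_of_ne_of_ne e1 e2] at hx
    rcases hc with ⟨h1, h2⟩ | ⟨h1, h2⟩ | ⟨h1, h2⟩
    · rw [h1] at h2; exact absurd h2 (by decide)
    · have h3 := key r₀ c h2; rw [h3] at h1; exact absurd h1 (by decide)
    · have h3 := key r₀ c h2; rw [h3] at h1; exact absurd h1 (by decide)

private lemma count_sum {k : ℕ} (r : Fin k → Fin 3) :
    (univ.filter fun c => r c = 1).card + (univ.filter fun c => r c = 2).card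
      + (univ.filter fun c => r c = 3).card = k := by
  classical
  have h := Finset.card_eq_sum_card_fiberwise
    (f := r) (s := univ) (t := (univ : Finset (Fin 3))) (fun x _ => Finset.mem_univ _)
  rw [Fin.sum_univ_three, Finset.card_univ, Fintype.card_fin] at h
  have h3 : (3 : Fin 3) = 0 := by decide
  rw [h3]
  omega

private lemma fiber_bound {k : ℕ} {P : Finset (Fin k → Fin 3)} (hP : IsUSP P) (c₁ c₂ : ℕ) :
    (P.filter fun r => (univ.filter fun c => r c = 1).card = c₁ ∧
        (univ.filter fun c => r c = 2).card = c₂).card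
      ≤ min (min (k.choose c₁) (k.choose c₂)) (k.choose (k - (c₁ + c₂))) := by
  classical
  have bound : ∀ (v : Fin 3) (m : ℕ),
      (∀ c c' : Fin k → Fin 3, c ∈ P → c' ∈ P → (∀ i, c i = v ↔ c' i = v) → c = c') →
      (∀ r, r ∈ P.filter (fun r => (univ.filter fun c => r c = 1).card = c₁ ∧
          (univ.filter fun c => r c = 2).card = c₂) →
        (univ.filter fun c => r c = v).card = m) →
      (P.filter fun r => (univ.filter fun c => r c = 1).card = c₁ ∧
          (univ.filter fun c => r c = 2).card = c₂).card ≤ k.choose m := by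
    intro v m hinj hm
    have := Finset.card_le_card_of_injOn
      (f := fun r : Fin k → Fin 3 => univ.filter fun c => r c = v)
      (t := (univ : Finset (Fin k)).powersetCard m)
      (fun r hr => Finset.mem_powersetCard.mpr ⟨Finset.subset_univ _, hm r hr⟩)
      (by
        intro r hr r' hr' heq
        have heq' : (univ.filter fun c => r c = v) = univ.filter fun c => r' c = v := heq
        have hrP := (Finset.mem_filter.mp hr).1
        have hr'P := (Finset.mem_filter.mp hr').1
        refine hinj r r' hrP hr'P fun i => ?_
        constructor
        · intro hi
          have : i ∈ univ.filter fun c => r c = v := Finset.mem_filter.mpr ⟨mem_univ _, hi⟩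
          rw [heq'] at this
          exact (Finset.mem_filter.mp this).2
        · intro hi
          have : i ∈ univ.filter fun c => r' c = v := Finset.mem_filter.mpr ⟨mem_univ _, hi⟩
          rw [← heq'] at this
          exact (Finset.mem_filter.mp this).2)
    rwa [Finset.card_powersetCard, Finset.card_univ, Fintype.card_fin] at this
  refine le_min (le_min ?_ ?_) ?_
  · exact bound 1 c₁ (fun c c' hc hc' => usp_inj1 hP hc hc')
      (fun r hr => (Finset.mem_filter.mp hr).2.1)
  · exact bound 2 c₂ (fun c c' hc hc' => usp_inj2 hP hc hc')
      (fun r hr => (Finset.mem_filter.mp hr).2.2)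
  · refine bound 3 (k - (c₁ + c₂)) (fun c c' hc hc' => usp_inj3 hP hc hc') fun r hr => ?_
    have h1 := (Finset.mem_filter.mp hr).2.1
    have h2 := (Finset.mem_filter.mp hr).2.2
    have := count_sum r
    omega

/-- USP bound: if `P` is an `(s,k)`-USP then
`s ≤ Σ_{c₁=0}^{k} Σ_{c₂=0}^{k-c₁} min(C(k,c₁), C(k,c₂), C(k, k-(c₁+c₂)))`. -/
theorem usp_bound {k : ℕ} (P : Finset (Fin k → Fin 3)) (hP : IsUSP P) :
    P.card ≤ ∑ c₁ ∈ Finset.range (k + 1), ∑ c₂ ∈ Finset.range (k - c₁ + 1),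
      min (min (k.choose c₁) (k.choose c₂)) (k.choose (k - (c₁ + c₂))) := by
  classical
  have hmem : ∀ r ∈ P, ((univ.filter fun c => r c = 1).card,
      (univ.filter fun c => r c = 2).card) ∈ Finset.range (k + 1) ×ˢ Finset.range (k + 1) := by
    intro r _
    have := count_sum r
    simp only [Finset.mem_product, Finset.mem_range]
    omega
  have hcard := Finset.card_eq_sum_card_fiberwise hmem
  rw [Finset.sum_product] at hcard
  rw [hcard]
  clear hcard hmem
  apply Finset.sum_le_sum
  intro c₁ hc₁
  have hsub : Finset.range (k - c₁ + 1) ⊆ Finset.range (k + 1) :=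
    Finset.range_subset_range.mpr (by omega)
  have hzero : ∀ c₂ ∈ Finset.range (k + 1), c₂ ∉ Finset.range (k - c₁ + 1) →
      (P.filter fun r => ((univ.filter fun c => r c = 1).card,
        (univ.filter fun c => r c = 2).card) = (c₁, c₂)).card = 0 := by
    intro c₂ _ hc₂
    rw [Finset.card_eq_zero, Finset.filter_eq_empty_iff]
    intro r _ heq
    have h1 : (univ.filter fun c => r c = 1).card = c₁ := congrArg Prod.fst heq
    have h2 : (univ.filter fun c => r c = 2).card = c₂ := congrArg Prod.snd heq
    have := count_sum r
    rw [Finset.mem_range] at hc₂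
    omega
  rw [← Finset.sum_subset hsub hzero]
  refine Finset.sum_le_sum fun c₂ _ => ?_
  calc (P.filter fun r => ((univ.filter fun c => r c = 1).card,
        (univ.filter fun c => r c = 2).card) = (c₁, c₂)).card
      = (P.filter fun r => (univ.filter fun c => r c = 1).card = c₁ ∧
          (univ.filter fun c => r c = 2).card = c₂).card := by
        congr 1
        apply Finset.filter_congr
        intro r _
        simp [Prod.ext_iff]
    _ ≤ _ := fiber_bound hP c₁ c₂
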